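/- arXiv:1312.6926 — 5 statements merged into one kernel-verified Lean document; each statement's English description precedes it below -/
import Mathlib

section
/- Let F^{AA*} and F^{BB*} denote the empirical spectral distributions of AA* and BB* where A and B are m×k complex matrices. Then sup_x |F^{AA*}(x) - F^{BB*}(x)| ≤ rank(A - B)/m. -/
open Matrix

/-- The empirical spectral distribution of an `m × m` Hermitian complex matrix:
`F^M(x) = (#{j : λ_j ≤ x}) / m` where the `λ_j` are the eigenvalues of `M`. -/
noncomputable def ESD {m : ℕ} {M : Matrix (Fin m) (Fin m) ℂ}
    (hM : M.IsHermitian) (x : ℝ) : ℝ :=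
  (Finset.univ.filter fun j => hM.eigenvalues j ≤ x).card / m

namespace ESDaux

variable {m k : ℕ}

lemma sum_dotP {s : Finset (Fin m)} (u : Fin m → (Fin m → ℂ)) (w : Fin m → ℂ) :
    (∑ i ∈ s, u i) ⬝ᵥ w = ∑ i ∈ s, u i ⬝ᵥ w := by
  simp only [dotProduct, Finset.sum_apply, Finset.sum_mul]
  exact Finset.sum_comm

lemma dotP_sum {s : Finset (Fin m)} (w : Fin m → ℂ) (u : Fin m → (Fin m → ℂ)) :
    w ⬝ᵥ (∑ i ∈ s, u i) = ∑ i ∈ s, w ⬝ᵥ u i := by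
  simp only [dotProduct, Finset.sum_apply, Finset.mul_sum]
  exact Finset.sum_comm

/-- dot products with an orthonormal family. -/
lemma dot_sum_sum (g : Fin m → (Fin m → ℂ))
    (horth : ∀ i j, star (g i) ⬝ᵥ g j = if i = j then (1 : ℂ) else 0)
    (s : Finset (Fin m)) (c d : Fin m → ℂ) :
    star (∑ i ∈ s, c i • g i) ⬝ᵥ (∑ j ∈ s, d j • g j)
      = ∑ i ∈ s, star (c i) * d i := by
  rw [star_sum, sum_dotP]
  refine Finset.sum_congr rfl fun i hi => ?_
  rw [dotP_sum]
  rw [Finset.sum_eq_single i]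
  · rw [star_smul, smul_dotProduct, dotProduct_smul, horth, if_pos rfl]
    simp [mul_comm, smul_eq_mul]
  · intro j hj hji
    rw [star_smul, smul_dotProduct, dotProduct_smul, horth, if_neg (Ne.symm hji)]
    simp
  · intro h; exact absurd hi h

/-- representation of elements of the span of part of an orthonormal eigenfamily,
together with the values of the quadratic forms. -/
lemma quad_repr (M : Matrix (Fin m) (Fin m) ℂ) (hM : M.IsHermitian)
    (s : Finset (Fin m)) (v : Fin m → ℂ)
    (hv : v ∈ Submodule.span ℂ ((fun i => (hM.eigenvectorBasis i : Fin m → ℂ)) '' s)) :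
    ∃ c : Fin m → ℂ,
      star v ⬝ᵥ v = ((∑ i ∈ s, ‖c i‖ ^ 2 : ℝ) : ℂ) ∧
      star v ⬝ᵥ (M *ᵥ v) = ((∑ i ∈ s, hM.eigenvalues i * ‖c i‖ ^ 2 : ℝ) : ℂ) := by
  set g : Fin m → (Fin m → ℂ) := fun i => (hM.eigenvectorBasis i : Fin m → ℂ) with hg
  have horth : ∀ i j, star (g i) ⬝ᵥ g j = if i = j then (1 : ℂ) else 0 := by
    intro i j
    have := hM.eigenvectorBasis.orthonormal
    rw [orthonormal_iff_ite] at this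
    have h2 := this i j
    rw [EuclideanSpace.inner_eq_star_dotProduct] at h2
    simpa [dotProduct, mul_comm] using h2
  obtain ⟨l, hl, hrep⟩ := (Finsupp.mem_span_image_iff_linearCombination ℂ).1 hv
  have hvsum : v = ∑ i ∈ s, l i • g i := by
    rw [← hrep, Finsupp.linearCombination_apply]
    rw [Finsupp.sum_of_support_subset l hl _ (fun i _ => zero_smul ℂ (g i))]
  have heig : ∀ i, M *ᵥ g i = (hM.eigenvalues i : ℂ) • g i := by
    intro i
    rw [hg]
    refine (hM.mulVec_eigenvectorBasis i).trans ?_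
    funext j
    simp [Complex.real_smul]
  refine ⟨fun i => l i, ?_, ?_⟩
  · rw [hvsum, dot_sum_sum g horth s]
    push_cast
    refine Finset.sum_congr rfl fun i hi => ?_
    exact RCLike.conj_mul (l i)
  · have hMv : M *ᵥ v = ∑ i ∈ s, ((hM.eigenvalues i : ℂ) * l i) • g i := by
      rw [hvsum]
      rw [show M *ᵥ (∑ i ∈ s, l i • g i) = ∑ i ∈ s, M *ᵥ (l i • g i) from
        map_sum M.mulVecLin _ s]
      refine Finset.sum_congr rfl fun i hi => ?_
      rw [mulVec_smul, heig i, smul_smul, mul_comm]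
    conv_lhs => rw [hMv, hvsum]
    rw [dot_sum_sum g horth s]
    push_cast
    refine Finset.sum_congr rfl fun i hi => ?_
    have h := RCLike.conj_mul (K := ℂ) (l i)
    simp only [Complex.star_def]
    calc (starRingEnd ℂ) (l i) * ((hM.eigenvalues i : ℂ) * l i)
        = (hM.eigenvalues i : ℂ) * ((starRingEnd ℂ) (l i) * l i) := by ring
      _ = _ := by rw [h]; rfl

lemma dotP_single (g : Fin m → (Fin m → ℂ))
    (horth : ∀ i j, star (g i) ⬝ᵥ g j = if i = j then (1 : ℂ) else 0)
    (s : Finset (Fin m)) (c : Fin m → ℂ) (j : Fin m) (hj : j ∈ s) :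
    star (g j) ⬝ᵥ (∑ i ∈ s, c i • g i) = c j := by
  rw [dotP_sum]
  rw [Finset.sum_eq_single j]
  · rw [dotProduct_smul, horth, if_pos rfl]; simp
  · intro i _ hij
    rw [dotProduct_smul, horth, if_neg (Ne.symm hij)]; simp
  · intro h; exact absurd hj h

lemma linIndep_of_orth (g : Fin m → (Fin m → ℂ))
    (horth : ∀ i j, star (g i) ⬝ᵥ g j = if i = j then (1 : ℂ) else 0) :
    LinearIndependent ℂ g := by
  rw [linearIndependent_iff']
  intro s c hsum i hi
  have := dotP_single g horth s c i hi
  rw [hsum] at this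
  simpa using this.symm

lemma finrank_span_image (g : Fin m → (Fin m → ℂ))
    (horth : ∀ i j, star (g i) ⬝ᵥ g j = if i = j then (1 : ℂ) else 0)
    (s : Finset (Fin m)) :
    Module.finrank ℂ (Submodule.span ℂ (g '' s)) = s.card := by
  have hli : LinearIndependent ℂ (fun x : ↥(s : Set (Fin m)) => g ↑x) :=
    (linIndep_of_orth g horth).comp _ Subtype.val_injective
  have himg : g '' (s : Set (Fin m)) = Set.range (fun x : ↥(s : Set (Fin m)) => g ↑x) :=
    Set.image_eq_range g ↑s
  rw [himg, finrank_span_eq_card hli]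
  simp

lemma orth_eigen (M : Matrix (Fin m) (Fin m) ℂ) (hM : M.IsHermitian) :
    ∀ i j, star ((hM.eigenvectorBasis i : Fin m → ℂ)) ⬝ᵥ (hM.eigenvectorBasis j : Fin m → ℂ)
      = if i = j then (1 : ℂ) else 0 := by
  intro i j
  have h := (orthonormal_iff_ite.mp hM.eigenvectorBasis.orthonormal) i j
  rw [EuclideanSpace.inner_eq_star_dotProduct] at h
  simpa [dotProduct, mul_comm] using h

lemma re_dot_self_nonneg (v : Fin m → ℂ) : 0 ≤ Complex.re (star v ⬝ᵥ v) := by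
  simp only [dotProduct, Pi.star_apply, Complex.star_def, Complex.re_sum]
  refine Finset.sum_nonneg fun i _ => ?_
  rw [mul_comm, Complex.mul_conj]
  exact Complex.normSq_nonneg _

lemma re_dot_self_pos {v : Fin m → ℂ} (hv : v ≠ 0) : 0 < Complex.re (star v ⬝ᵥ v) := by
  obtain ⟨j, hj⟩ : ∃ j, v j ≠ 0 := by
    by_contra h; push_neg at h; exact hv (funext h)
  simp only [dotProduct, Pi.star_apply, Complex.star_def, Complex.re_sum]
  refine Finset.sum_pos' (fun i _ => ?_) ⟨j, Finset.mem_univ j, ?_⟩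
  · rw [mul_comm, Complex.mul_conj]; exact Complex.normSq_nonneg _
  · rw [mul_comm, Complex.mul_conj]
    exact_mod_cast Complex.normSq_pos.mpr hj

lemma quad_le (M : Matrix (Fin m) (Fin m) ℂ) (hM : M.IsHermitian) (x : ℝ) (v : Fin m → ℂ)
    (hv : v ∈ Submodule.span ℂ ((fun i => (hM.eigenvectorBasis i : Fin m → ℂ)) ''
      (Finset.univ.filter fun j => hM.eigenvalues j ≤ x))) :
    Complex.re (star v ⬝ᵥ (M *ᵥ v)) ≤ x * Complex.re (star v ⬝ᵥ v) := by
  obtain ⟨c, h1, h2⟩ := quad_repr M hM _ v hv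
  rw [h1, h2, Complex.ofReal_re, Complex.ofReal_re, Finset.mul_sum]
  refine Finset.sum_le_sum fun i hi => ?_
  have hxi : hM.eigenvalues i ≤ x := (Finset.mem_filter.mp hi).2
  exact mul_le_mul_of_nonneg_right hxi (by positivity)

lemma quad_gt (M : Matrix (Fin m) (Fin m) ℂ) (hM : M.IsHermitian) (x : ℝ) (v : Fin m → ℂ)
    (hv0 : v ≠ 0)
    (hv : v ∈ Submodule.span ℂ ((fun i => (hM.eigenvectorBasis i : Fin m → ℂ)) ''
      (Finset.univ.filter fun j => ¬ hM.eigenvalues j ≤ x))) :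
    x * Complex.re (star v ⬝ᵥ v) < Complex.re (star v ⬝ᵥ (M *ᵥ v)) := by
  obtain ⟨c, h1, h2⟩ := quad_repr M hM _ v hv
  have hpos : 0 < Complex.re (star v ⬝ᵥ v) := re_dot_self_pos hv0
  rw [h1, Complex.ofReal_re] at hpos ⊢
  rw [h2, Complex.ofReal_re, Finset.mul_sum]
  obtain ⟨j, hj, hcj⟩ : ∃ j ∈ (Finset.univ.filter fun j => ¬ hM.eigenvalues j ≤ x),
      (0:ℝ) < ‖c j‖ ^ 2 :=
    Finset.exists_lt_of_sum_lt (by simpa using hpos)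
  refine Finset.sum_lt_sum (fun i hi => ?_) ⟨j, hj, ?_⟩
  · have hxi : x ≤ hM.eigenvalues i := le_of_lt (lt_of_not_ge (Finset.mem_filter.mp hi).2)
    exact mul_le_mul_of_nonneg_right hxi (by positivity)
  · have hxj : x < hM.eigenvalues j := lt_of_not_ge (Finset.mem_filter.mp hj).2
    exact mul_lt_mul_of_pos_right hxj hcj

lemma quad_eq_normSq (A : Matrix (Fin m) (Fin k) ℂ) (v : Fin m → ℂ) :
    star v ⬝ᵥ ((A * Aᴴ) *ᵥ v) = star (Aᴴ *ᵥ v) ⬝ᵥ (Aᴴ *ᵥ v) := by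
  rw [← mulVec_mulVec, dotProduct_mulVec, star_mulVec, conjTranspose_conjTranspose]

lemma count_le (A B : Matrix (Fin m) (Fin k) ℂ) (x : ℝ) :
    (Finset.univ.filter fun j =>
        (isHermitian_mul_conjTranspose_self B).eigenvalues j ≤ x).card ≤
      (Finset.univ.filter fun j =>
        (isHermitian_mul_conjTranspose_self A).eigenvalues j ≤ x).card + (A - B).rank := by
  set hA := isHermitian_mul_conjTranspose_self A
  set hB := isHermitian_mul_conjTranspose_self B
  set sB := Finset.univ.filter fun j => hB.eigenvalues j ≤ x with hsB
  set tA := Finset.univ.filter fun j => ¬ hA.eigenvalues j ≤ x with htA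
  set SB : Submodule ℂ (Fin m → ℂ) :=
    Submodule.span ℂ ((fun i => (hB.eigenvectorBasis i : Fin m → ℂ)) '' sB) with hSB
  set TA : Submodule ℂ (Fin m → ℂ) :=
    Submodule.span ℂ ((fun i => (hA.eigenvectorBasis i : Fin m → ℂ)) '' tA) with hTA
  set K := LinearMap.ker (Matrix.mulVecLin (A - B)ᴴ) with hK
  -- the triple intersection is trivial
  have htriv : (SB ⊓ K) ⊓ TA = ⊥ := by
    rw [eq_bot_iff]
    rintro v ⟨⟨hvSB, hvK⟩, hvTA⟩
    rw [Submodule.mem_bot]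
    by_contra hv0
    have hgt := quad_gt (A * Aᴴ) hA x v hv0 hvTA
    have hle := quad_le (B * Bᴴ) hB x v hvSB
    have hker : (A - B)ᴴ *ᵥ v = 0 := hvK
    have heqv : Aᴴ *ᵥ v = Bᴴ *ᵥ v := by
      have := sub_eq_zero.mp (by rw [conjTranspose_sub, sub_mulVec] at hker; exact hker)
      exact this
    have hQ : star v ⬝ᵥ ((A * Aᴴ) *ᵥ v) = star v ⬝ᵥ ((B * Bᴴ) *ᵥ v) := by
      rw [quad_eq_normSq, quad_eq_normSq, heqv]
    rw [hQ] at hgt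
    linarith
  have hfin : Module.finrank ℂ (Fin m → ℂ) = m := by
    rw [Module.finrank_pi, Fintype.card_fin]
  have e1 : Module.finrank ℂ SB = sB.card :=
    finrank_span_image _ (orth_eigen _ hB) sB
  have e2 : Module.finrank ℂ TA = tA.card :=
    finrank_span_image _ (orth_eigen _ hA) tA
  have e2' : (Finset.univ.filter fun j => hA.eigenvalues j ≤ x).card + tA.card = m := by
    rw [htA, Finset.card_filter_add_card_filter_not, Finset.card_univ, Fintype.card_fin]
  have e3 : (A - B)ᴴ.rank + Module.finrank ℂ K = m := by
    have h := LinearMap.finrank_range_add_finrank_ker (Matrix.mulVecLin (A - B)ᴴ)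
    rw [hfin] at h
    simpa [Matrix.rank, hK] using h
  have e3' : (A - B)ᴴ.rank = (A - B).rank := by
    open ComplexOrder in exact Matrix.rank_conjTranspose _
  have e4 : Module.finrank ℂ ↥(SB ⊔ K) + Module.finrank ℂ ↥(SB ⊓ K)
      = Module.finrank ℂ SB + Module.finrank ℂ K :=
    Submodule.finrank_sup_add_finrank_inf_eq SB K
  have e5 : Module.finrank ℂ ↥(SB ⊔ K) ≤ m := by
    have h := Submodule.finrank_le (SB ⊔ K); rw [hfin] at h; exact h
  have e6 : Module.finrank ℂ ↥((SB ⊓ K) ⊔ TA) ≤ m := by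
    have h := Submodule.finrank_le ((SB ⊓ K) ⊔ TA); rw [hfin] at h; exact h
  have e7 : Module.finrank ℂ ↥((SB ⊓ K) ⊔ TA) + Module.finrank ℂ ↥((SB ⊓ K) ⊓ TA)
      = Module.finrank ℂ ↥(SB ⊓ K) + Module.finrank ℂ TA :=
    Submodule.finrank_sup_add_finrank_inf_eq _ _
  rw [htriv, finrank_bot] at e7
  omega

end ESDaux

/-- Rank inequality: for `m × k` complex matrices `A`, `B`,
`sup_x |F^{AA*}(x) - F^{BB*}(x)| ≤ rank(A - B) / m`. -/
theorem esd_rank_inequality {m k : ℕ} (hm : 0 < m)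
    (A B : Matrix (Fin m) (Fin k) ℂ) (x : ℝ) :
    |ESD (isHermitian_mul_conjTranspose_self A) x -
      ESD (isHermitian_mul_conjTranspose_self B) x| ≤ ((A - B).rank : ℝ) / m := by
  have h1 := ESDaux.count_le A B x
  have h2 := ESDaux.count_le B A x
  have hr : (B - A).rank = (A - B).rank := by
    rw [show B - A = -(A - B) from (neg_sub A B).symm]
    have hneg : (-(A - B)).mulVecLin = -((A - B).mulVecLin) := by
      ext v
      simp [Matrix.mulVecLin_apply, Matrix.neg_mulVec]
    unfold Matrix.rank
    rw [hneg, LinearMap.range_neg]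
  rw [hr] at h2
  set NA := (Finset.univ.filter fun j =>
    (isHermitian_mul_conjTranspose_self A).eigenvalues j ≤ x).card with hNA
  set NB := (Finset.univ.filter fun j =>
    (isHermitian_mul_conjTranspose_self B).eigenvalues j ≤ x).card with hNB
  have hm' : (0:ℝ) < m := by exact_mod_cast hm
  have habs : |(NA : ℝ) - NB| ≤ ((A - B).rank : ℝ) := by
    rw [abs_sub_le_iff]
    constructor
    · have h2' : (NA:ℝ) ≤ NB + (A - B).rank := by exact_mod_cast h2
      linarith
    · have h1' : (NB:ℝ) ≤ NA + (A - B).rank := by exact_mod_cast h1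
      linarith
  have : ESD (isHermitian_mul_conjTranspose_self A) x -
      ESD (isHermitian_mul_conjTranspose_self B) x = ((NA : ℝ) - NB) / m := by
    unfold ESD
    rw [div_sub_div_same]
  rw [this, abs_div, abs_of_pos hm']
  gcongr
end

section
/- Let A and B be m×k complex matrices. Then the Lévy distance between the empirical spectral distributions of AA* and BB* satisfies L(F^{AA*}, F^{BB*}) ≤ 2‖A‖₂·‖A - B‖₂ + ‖A - B‖₂², where ‖·‖₂ is the operator norm. -/
open Matrix
open scoped Matrix.Norms.L2Operator

/-- The Lévy distance between two functions `F, G : ℝ → ℝ`. -/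
noncomputable def levyDist (F G : ℝ → ℝ) : ℝ :=
  sInf {ε : ℝ | 0 < ε ∧ ∀ x, F (x - ε) - ε ≤ G x ∧ G x ≤ F (x + ε) + ε}

open Finset
open scoped InnerProductSpace


lemma aux_repr_toEuclideanLin {m : ℕ} {M : Matrix (Fin m) (Fin m) ℂ} (hM : M.IsHermitian)
    (v : EuclideanSpace ℂ (Fin m)) (j : Fin m) :
    hM.eigenvectorBasis.repr (toEuclideanLin M v) j
      = (hM.eigenvalues j : ℂ) * hM.eigenvectorBasis.repr v j := by
  rw [OrthonormalBasis.repr_apply_apply, OrthonormalBasis.repr_apply_apply,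
    ← (isHermitian_iff_isSymmetric.1 hM) (hM.eigenvectorBasis j) v]
  have h : toEuclideanLin M (hM.eigenvectorBasis j)
      = (hM.eigenvalues j : ℂ) • hM.eigenvectorBasis j := by
    apply (WithLp.equiv 2 _).injective
    change M *ᵥ ⇑(hM.eigenvectorBasis j) = ⇑((hM.eigenvalues j : ℂ) • hM.eigenvectorBasis j)
    have := hM.mulVec_eigenvectorBasis j
    rw [RCLike.real_smul_eq_coe_smul (K := ℂ)] at this
    exact this
  rw [h, inner_smul_left]
  simp

lemma aux_quad {m : ℕ} {M : Matrix (Fin m) (Fin m) ℂ} (hM : M.IsHermitian)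
    (hrepr : ∀ (v : EuclideanSpace ℂ (Fin m)) (j : Fin m),
      hM.eigenvectorBasis.repr (toEuclideanLin M v) j
        = (hM.eigenvalues j : ℂ) * hM.eigenvectorBasis.repr v j)
    (v : EuclideanSpace ℂ (Fin m)) :
    RCLike.re (⟪v, toEuclideanLin M v⟫_ℂ)
      = ∑ j, hM.eigenvalues j * ‖hM.eigenvectorBasis.repr v j‖ ^ 2 := by
  set e := hM.eigenvectorBasis
  rw [← e.repr.inner_map_map v (toEuclideanLin M v)]
  rw [PiLp.inner_apply]
  rw [map_sum]
  congr 1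
  ext j
  rw [hrepr v j, RCLike.inner_apply]
  have : (hM.eigenvalues j : ℂ) * e.repr v j * (starRingEnd ℂ) (e.repr v j)
      = (hM.eigenvalues j : ℂ) * ((starRingEnd ℂ) (e.repr v j) * e.repr v j) := by ring
  rw [this, RCLike.conj_mul]
  simp [RCLike.ofReal_pow]
  left
  norm_cast

lemma aux_normsq {m : ℕ} {M : Matrix (Fin m) (Fin m) ℂ} (hM : M.IsHermitian)
    (v : EuclideanSpace ℂ (Fin m)) :
    ‖v‖ ^ 2 = ∑ j, ‖hM.eigenvectorBasis.repr v j‖ ^ 2 := by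
  rw [← hM.eigenvectorBasis.repr.norm_map v, EuclideanSpace.norm_eq]
  rw [Real.sq_sqrt (by positivity)]

lemma aux_mem_span {m : ℕ} (e : OrthonormalBasis (Fin m) ℂ (EuclideanSpace ℂ (Fin m)))
    (S : Finset (Fin m)) {v : EuclideanSpace ℂ (Fin m)}
    (hv : v ∈ Submodule.span ℂ (e '' (S : Set (Fin m))))
    {j : Fin m} (hj : j ∉ S) : e.repr v j = 0 := by
  classical
  induction hv using Submodule.span_induction with
  | mem w hw =>
      obtain ⟨i, hi, rfl⟩ := hw
      rw [e.repr_self]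
      rw [EuclideanSpace.single_apply]
      simp only [ite_eq_right_iff]
      intro h; subst h; exact absurd hi hj
  | zero => simp
  | add u w _ _ hu hw => simp [map_add, hu, hw]
  | smul c u _ hu => simp [_root_.map_smul, hu]

lemma aux_finrank_span {m : ℕ} (e : OrthonormalBasis (Fin m) ℂ (EuclideanSpace ℂ (Fin m)))
    (S : Finset (Fin m)) :
    Module.finrank ℂ ↥(Submodule.span ℂ (e '' (S : Set (Fin m)))) = S.card := by
  classical
  have hinj : Function.Injective e := e.orthonormal.linearIndependent.injective
  have heq : (e '' (S : Set (Fin m))) = ((S.image fun j => e j : Finset _) : Set _) := by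
    simp [Finset.coe_image]
  rw [heq, finrank_span_finset_eq_card, Finset.card_image_of_injective _ hinj]
  have : LinearIndependent ℂ ((↑) : Set.range e → EuclideanSpace ℂ (Fin m)) :=
    (linearIndepOn_id_range_iff hinj).mpr e.orthonormal.linearIndependent
  refine LinearIndepOn.mono this fun w hw => ?_
  obtain ⟨i, -, rfl⟩ := Finset.mem_image.1 (Finset.mem_coe.1 hw)
  exact Set.mem_range_self i


lemma aux_count {m : ℕ} {M N : Matrix (Fin m) (Fin m) ℂ} (hM : M.IsHermitian)
    (hN : N.IsHermitian) {δ : ℝ} (hδ : ‖M - N‖ ≤ δ) (x : ℝ) :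
    (Finset.univ.filter fun j => hN.eigenvalues j ≤ x).card
      ≤ (Finset.univ.filter fun j => hM.eigenvalues j ≤ x + δ).card := by
  classical
  set S := Finset.univ.filter fun j => hN.eigenvalues j ≤ x with hS
  set T := Finset.univ.filter fun j => hM.eigenvalues j ≤ x + δ with hT
  set Tc := Finset.univ.filter fun j => ¬ hM.eigenvalues j ≤ x + δ with hTc
  set eN := hN.eigenvectorBasis with heN
  set eM := hM.eigenvectorBasis with heM
  set V := Submodule.span ℂ (eN '' (S : Set (Fin m))) with hV
  set W := Submodule.span ℂ (eM '' (Tc : Set (Fin m))) with hW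
  have hdisj : V ⊓ W = ⊥ := by
    rw [Submodule.eq_bot_iff]
    rintro v ⟨hvV, hvW⟩
    by_contra hv0
    have h1 : RCLike.re (⟪v, toEuclideanLin N v⟫_ℂ) ≤ x * ‖v‖ ^ 2 := by
      rw [aux_quad hN (aux_repr_toEuclideanLin hN) v, aux_normsq hN v, Finset.mul_sum]
      apply Finset.sum_le_sum
      intro j _
      by_cases hj : j ∈ S
      · exact mul_le_mul_of_nonneg_right (Finset.mem_filter.1 hj).2 (sq_nonneg _)
      · rw [aux_mem_span eN S hvV hj]; simp
    have h2 : (x + δ) * ‖v‖ ^ 2 < RCLike.re (⟪v, toEuclideanLin M v⟫_ℂ) := by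
      rw [aux_quad hM (aux_repr_toEuclideanLin hM) v, aux_normsq hM v, Finset.mul_sum]
      have hex : ∃ j0, eM.repr v j0 ≠ 0 := by
        by_contra hc
        push_neg at hc
        exact hv0 (eM.repr.map_eq_zero_iff.1 (PiLp.ext hc))
      obtain ⟨j0, hj0⟩ := hex
      have hj0Tc : j0 ∈ Tc := by
        by_contra hc; exact hj0 (aux_mem_span eM Tc hvW hc)
      have hj0lt : x + δ < hM.eigenvalues j0 :=
        lt_of_not_ge (Finset.mem_filter.1 hj0Tc).2
      apply Finset.sum_lt_sum
      · intro j _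
        by_cases hj : j ∈ Tc
        · exact mul_le_mul_of_nonneg_right
            (le_of_lt (lt_of_not_ge (Finset.mem_filter.1 hj).2)) (sq_nonneg _)
        · rw [aux_mem_span eM Tc hvW hj]; simp
      · refine ⟨j0, Finset.mem_univ j0, ?_⟩
        have hpos : 0 < ‖eM.repr v j0‖ ^ 2 := pow_pos (norm_pos_iff.2 hj0) 2
        exact mul_lt_mul_of_pos_right hj0lt hpos
    have h3 : RCLike.re (⟪v, toEuclideanLin M v⟫_ℂ) - RCLike.re (⟪v, toEuclideanLin N v⟫_ℂ)
        ≤ δ * ‖v‖ ^ 2 := by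
      have heq : RCLike.re (⟪v, toEuclideanLin M v⟫_ℂ) - RCLike.re (⟪v, toEuclideanLin N v⟫_ℂ)
          = RCLike.re (⟪v, toEuclideanLin (M - N) v⟫_ℂ) := by
        rw [map_sub, LinearMap.sub_apply, inner_sub_right, map_sub]
      rw [heq]
      have hb : ‖toEuclideanLin (M - N) v‖ ≤ ‖M - N‖ * ‖v‖ :=
        (M - N).l2_opNorm_mulVec v
      calc RCLike.re (⟪v, toEuclideanLin (M - N) v⟫_ℂ)
          ≤ ‖(⟪v, toEuclideanLin (M - N) v⟫_ℂ)‖ := RCLike.re_le_norm _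
        _ ≤ ‖v‖ * ‖toEuclideanLin (M - N) v‖ := norm_inner_le_norm _ _
        _ ≤ δ * ‖v‖ ^ 2 := by
            nlinarith [hb, hδ, norm_nonneg v, norm_nonneg (toEuclideanLin (M - N) v), mul_le_mul_of_nonneg_left hb (norm_nonneg v), mul_le_mul_of_nonneg_right hδ (mul_nonneg (norm_nonneg v) (norm_nonneg v))]
    nlinarith [h1, h2, h3]
  have hVr : Module.finrank ℂ V = S.card := aux_finrank_span eN S
  have hWr : Module.finrank ℂ W = Tc.card := aux_finrank_span eM Tc
  have hsum := Submodule.finrank_sup_add_finrank_inf_eq V W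
  rw [hdisj, hVr, hWr] at hsum
  rw [finrank_bot ℂ (EuclideanSpace ℂ (Fin m)), add_zero] at hsum
  have hle : Module.finrank ℂ ↥(V ⊔ W) ≤ m := by
    have h := Submodule.finrank_le (V ⊔ W)
    simpa [finrank_euclideanSpace] using h
  have hcompl : T.card + Tc.card = m := by
    rw [hT, hTc]
    have h := Finset.card_filter_add_card_filter_not
      (s := (Finset.univ : Finset (Fin m))) (p := fun j => hM.eigenvalues j ≤ x + δ)
    simp only [not_le] at h ⊢
    simpa using h
  omega


lemma aux_div_le {a b : ℕ} (m : ℕ) (h : a ≤ b) : (a : ℝ) / m ≤ (b : ℝ) / m := by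
  rcases Nat.eq_zero_or_pos m with hm | hm
  · simp [hm]
  · have : (0:ℝ) < m := by exact_mod_cast hm
    gcongr

lemma aux_ESD_le {m : ℕ} {M N : Matrix (Fin m) (Fin m) ℂ} (hM : M.IsHermitian)
    (hN : N.IsHermitian) {δ : ℝ} (hδ : ‖M - N‖ ≤ δ) (x : ℝ) :
    ESD hN x ≤ ESD hM (x + δ) :=
  aux_div_le m (aux_count hM hN hδ x)

lemma aux_ESD_mono {m : ℕ} {M : Matrix (Fin m) (Fin m) ℂ} (hM : M.IsHermitian)
    {x y : ℝ} (h : x ≤ y) : ESD hM x ≤ ESD hM y := by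
  apply aux_div_le
  apply Finset.card_le_card
  apply Finset.monotone_filter_right
  intro j _ hj
  exact le_trans hj h

lemma aux_norm_bound {m k : ℕ} (A B : Matrix (Fin m) (Fin k) ℂ) :
    ‖A * Aᴴ - B * Bᴴ‖ ≤ 2 * ‖A‖ * ‖A - B‖ + ‖A - B‖ ^ 2 := by
  have hid : A * Aᴴ - B * Bᴴ
      = A * (A - B)ᴴ + (A - B) * Aᴴ - (A - B) * (A - B)ᴴ := by
    simp only [conjTranspose_sub, Matrix.mul_sub, Matrix.sub_mul]
    abel
  rw [hid]
  calc ‖A * (A - B)ᴴ + (A - B) * Aᴴ - (A - B) * (A - B)ᴴ‖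
      ≤ ‖A * (A - B)ᴴ + (A - B) * Aᴴ‖ + ‖(A - B) * (A - B)ᴴ‖ := norm_sub_le _ _
    _ ≤ ‖A * (A - B)ᴴ‖ + ‖(A - B) * Aᴴ‖ + ‖(A - B) * (A - B)ᴴ‖ := by
        gcongr; exact norm_add_le _ _
    _ ≤ ‖A‖ * ‖(A - B)ᴴ‖ + ‖A - B‖ * ‖Aᴴ‖ + ‖A - B‖ * ‖(A - B)ᴴ‖ := by
        gcongr <;> exact Matrix.l2_opNorm_mul _ _
    _ = 2 * ‖A‖ * ‖A - B‖ + ‖A - B‖ ^ 2 := by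
        rw [Matrix.l2_opNorm_conjTranspose, Matrix.l2_opNorm_conjTranspose]
        ring
/-- For `m × k` complex matrices `A`, `B`, the Lévy distance between the ESDs of
`AA*` and `BB*` satisfies `L(F^{AA*}, F^{BB*}) ≤ 2‖A‖₂‖A-B‖₂ + ‖A-B‖₂²`,
where `‖·‖₂` is the operator norm. -/
theorem levy_esd_mul_conjTranspose_le {m k : ℕ} (A B : Matrix (Fin m) (Fin k) ℂ) :
    levyDist (ESD (isHermitian_mul_conjTranspose_self A))
        (ESD (isHermitian_mul_conjTranspose_self B)) ≤
      2 * ‖A‖ * ‖A - B‖ + ‖A - B‖ ^ 2 := by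
  set δ := 2 * ‖A‖ * ‖A - B‖ + ‖A - B‖ ^ 2 with hδdef
  have hδ0 : 0 ≤ δ := by positivity
  have hAB : ‖A * Aᴴ - B * Bᴴ‖ ≤ δ := aux_norm_bound A B
  have hBA : ‖B * Bᴴ - A * Aᴴ‖ ≤ δ := by rwa [norm_sub_rev]
  set FA := ESD (isHermitian_mul_conjTranspose_self A) with hFA
  set FB := ESD (isHermitian_mul_conjTranspose_self B) with hFB
  have hmem : ∀ ε : ℝ, δ < ε →
      ε ∈ {ε : ℝ | 0 < ε ∧ ∀ x, FA (x - ε) - ε ≤ FB x ∧ FB x ≤ FA (x + ε) + ε} := by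
    intro ε hε
    have hε0 : 0 < ε := lt_of_le_of_lt hδ0 hε
    refine ⟨hε0, fun x => ⟨?_, ?_⟩⟩
    · have h1 : FA (x - ε) ≤ FB (x - ε + δ) :=
        aux_ESD_le (isHermitian_mul_conjTranspose_self B)
          (isHermitian_mul_conjTranspose_self A) hBA (x - ε)
      have h2 : FB (x - ε + δ) ≤ FB x :=
        aux_ESD_mono (isHermitian_mul_conjTranspose_self B) (by linarith)
      linarith
    · have h1 : FB x ≤ FA (x + δ) :=
        aux_ESD_le (isHermitian_mul_conjTranspose_self A)
          (isHermitian_mul_conjTranspose_self B) hAB x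
      have h2 : FA (x + δ) ≤ FA (x + ε) :=
        aux_ESD_mono (isHermitian_mul_conjTranspose_self A) (by linarith)
      linarith
  have hbdd : BddBelow
      {ε : ℝ | 0 < ε ∧ ∀ x, FA (x - ε) - ε ≤ FB x ∧ FB x ≤ FA (x + ε) + ε} :=
    ⟨0, fun y hy => le_of_lt hy.1⟩
  rw [levyDist]
  exact le_of_forall_gt_imp_ge_of_dense fun ε hε => csInf_le hbdd (hmem ε hε)
end

section
/- Let F₁, F₂ be distribution functions and let G satisfy sup_x |G(x+θ) - G(x)| ≤ g(θ) for all θ ≥ 0, where g is increasing and continuous with g(0) = 0. Then ‖F₁ - G‖ ≤ 3·max{‖F₂ - G‖, L(F₁, F₂), g(L(F₁, F₂))}, where ‖·‖ denotes the sup norm and L the Lévy distance. -/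
/-- If `F₁, F₂` are distribution functions and `G` has modulus of continuity `g`
(increasing, continuous, `g 0 = 0`), then
`‖F₁ - G‖ ≤ 3 max{‖F₂ - G‖, L(F₁,F₂), g(L(F₁,F₂))}`. -/
theorem sup_dist_le_three_max (F₁ F₂ G : ℝ → ℝ) (g : ℝ → ℝ)
    (hF₁mono : Monotone F₁) (hF₁0 : Filter.Tendsto F₁ Filter.atBot (nhds 0))
    (hF₁1 : Filter.Tendsto F₁ Filter.atTop (nhds 1))
    (hF₂mono : Monotone F₂) (hF₂0 : Filter.Tendsto F₂ Filter.atBot (nhds 0))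
    (hF₂1 : Filter.Tendsto F₂ Filter.atTop (nhds 1))
    (hg_mono : Monotone g) (hg_cont : Continuous g) (hg0 : g 0 = 0)
    (hG : ∀ x θ, 0 ≤ θ → |G (x + θ) - G x| ≤ g θ)
    (hbdd : BddAbove (Set.range fun x => |F₂ x - G x|)) :
    ∀ x, |F₁ x - G x| ≤
      3 * max (⨆ y, |F₂ y - G y|)
        (max (levyDist F₁ F₂) (g (levyDist F₁ F₂))) := by
  intro x
  set D := ⨆ y, |F₂ y - G y| with hD
  set S := {ε : ℝ | 0 < ε ∧ ∀ x, F₁ (x - ε) - ε ≤ F₂ x ∧ F₂ x ≤ F₁ (x + ε) + ε} with hS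
  set L := levyDist F₁ F₂ with hL
  have hLS : L = sInf S := rfl
  -- bounds on F₁, F₂
  have hF₁le : ∀ y, F₁ y ≤ 1 := fun y => hF₁mono.ge_of_tendsto hF₁1 y
  have hF₂le : ∀ y, F₂ y ≤ 1 := fun y => hF₂mono.ge_of_tendsto hF₂1 y
  have hF₁ge : ∀ y, 0 ≤ F₁ y := fun y => hF₁mono.le_of_tendsto hF₁0 y
  have hF₂ge : ∀ y, 0 ≤ F₂ y := fun y => hF₂mono.le_of_tendsto hF₂0 y
  have hone : (1 : ℝ) ∈ S := by
    refine ⟨one_pos, fun y => ⟨?_, ?_⟩⟩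
    · have := hF₁le (y - 1); have := hF₂ge y; linarith
    · have := hF₂le y; have := hF₁ge (y + 1); linarith
  have hSne : S.Nonempty := ⟨1, hone⟩
  have hSbdd : BddBelow S := ⟨0, fun ε hε => hε.1.le⟩
  have hL0 : 0 ≤ L := le_csInf hSne fun ε hε => hε.1.le
  have hDbound : ∀ y, |F₂ y - G y| ≤ D := fun y => le_ciSup hbdd y
  have hD0 : 0 ≤ D := (abs_nonneg _).trans (hDbound 0)
  -- upward closedness: any ε > L lies in S
  have hup : ∀ ε, L < ε → ε ∈ S := by
    intro ε hε
    obtain ⟨δ, hδS, hδε⟩ := csInf_lt_iff hSbdd hSne |>.mp hε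
    refine ⟨lt_trans hδS.1 hδε, fun y => ⟨?_, ?_⟩⟩
    · have h1 := (hδS.2 y).1
      have h2 : F₁ (y - ε) ≤ F₁ (y - δ) := hF₁mono (by linarith)
      linarith
    · have h1 := (hδS.2 y).2
      have h2 : F₁ (y + δ) ≤ F₁ (y + ε) := hF₁mono (by linarith)
      linarith
  -- the core bound for ε ∈ S
  have hcore : ∀ ε ∈ S, |F₁ x - G x| ≤ D + ε + g ε := by
    intro ε hε
    have hε0 : (0 : ℝ) ≤ ε := hε.1.le
    have h1 : F₁ x ≤ F₂ (x + ε) + ε := by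
      have := (hε.2 (x + ε)).1
      simpa using this
    have h2 : F₂ (x - ε) - ε ≤ F₁ x := by
      have := (hε.2 (x - ε)).2
      simpa using this
    have h3 := abs_le.mp (hDbound (x + ε))
    have h4 := abs_le.mp (hDbound (x - ε))
    have h5 := abs_le.mp (hG x ε hε0)
    have h6 := abs_le.mp (hG (x - ε) ε hε0)
    rw [sub_add_cancel] at h6
    rw [abs_le]
    constructor
    · linarith [h4.1, h6.2]
    · linarith [h3.2, h5.2]
  -- pass to the limit ε → L⁺
  have hlim : |F₁ x - G x| ≤ D + L + g L := by
    have hc : Filter.Tendsto (fun ε => D + ε + g ε) (nhdsWithin L (Set.Ioi L))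
        (nhds (D + L + g L)) := by
      have : Continuous fun ε : ℝ => D + ε + g ε :=
        (continuous_const.add continuous_id).add hg_cont
      exact (this.tendsto L).mono_left nhdsWithin_le_nhds
    refine ge_of_tendsto hc ?_
    filter_upwards [self_mem_nhdsWithin] with ε (hε : L < ε)
    exact hcore ε (hup ε hε)
  have hgL0 : 0 ≤ g L := by rw [← hg0]; exact hg_mono hL0
  have m1 : D ≤ max D (max L (g L)) := le_max_left _ _
  have m2 : L ≤ max D (max L (g L)) := le_trans (le_max_left _ _) (le_max_right _ _)
  have m3 : g L ≤ max D (max L (g L)) := le_trans (le_max_right _ _) (le_max_right _ _)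
  linarith
end

section
/- Let z = u + iv with v > 0, let A be an n×n Hermitian complex matrix, and let A_k be the (n-1)×(n-1) matrix obtained from A by deleting its k-th row and column. Then |tr((A - zIₙ)⁻¹) - tr((A_k - zI_{n-1})⁻¹)| ≤ 1/v. -/
open Matrix

section Aux

variable {m : ℕ}

/-- Spectral form of the resolvent: the given matrix is a right inverse of `B - z•1`. -/
lemma resolvent_right_inv (B : Matrix (Fin m) (Fin m) ℂ) (hB : B.IsHermitian)
    {z : ℂ} (hz : z.im ≠ 0) :
    (B - z • (1 : Matrix (Fin m) (Fin m) ℂ)) *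
      ((hB.eigenvectorUnitary : Matrix (Fin m) (Fin m) ℂ)
        * diagonal (fun i => ((hB.eigenvalues i : ℂ) - z)⁻¹)
        * star (hB.eigenvectorUnitary : Matrix (Fin m) (Fin m) ℂ)) = 1 := by
  set U : Matrix (Fin m) (Fin m) ℂ := (hB.eigenvectorUnitary : Matrix (Fin m) (Fin m) ℂ) with hU
  have hUU : U * star U = 1 := Matrix.mem_unitaryGroup_iff.mp hB.eigenvectorUnitary.2
  have hUU' : star U * U = 1 := Matrix.mem_unitaryGroup_iff'.mp hB.eigenvectorUnitary.2
  have hBU : B - z • 1 = U * diagonal (fun i => (hB.eigenvalues i : ℂ) - z) * star U := by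
    conv_lhs => rw [hB.spectral_theorem, Unitary.conjStarAlgAut_apply]
    have : (z • (1 : Matrix (Fin m) (Fin m) ℂ)) = U * (z • 1) * star U := by
      rw [Matrix.mul_smul, Matrix.smul_mul, mul_one, hUU]
    rw [this, ← Matrix.sub_mul, ← Matrix.mul_sub]
    congr 1
    congr 1
    rw [smul_one_eq_diagonal, diagonal_sub]
    rfl
  rw [hBU]
  have hstep : ∀ X : Matrix (Fin m) (Fin m) ℂ, star U * (U * X) = X := by
    intro X; rw [← mul_assoc, hUU', one_mul]
  have hnz : ∀ i, (hB.eigenvalues i : ℂ) - z ≠ 0 := by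
    intro i h
    apply hz
    have := congrArg Complex.im h
    simpa using this.symm
  have hdiag : diagonal (fun i => (hB.eigenvalues i : ℂ) - z)
      * diagonal (fun i => ((hB.eigenvalues i : ℂ) - z)⁻¹) = 1 := by
    rw [diagonal_mul_diagonal]
    have : (fun i => ((hB.eigenvalues i : ℂ) - z) * ((hB.eigenvalues i : ℂ) - z)⁻¹)
        = fun _ => (1 : ℂ) := by
      funext i; exact mul_inv_cancel₀ (hnz i)
    rw [this, diagonal_one]
  simp only [Matrix.mul_assoc]
  rw [hstep, ← Matrix.mul_assoc (diagonal _), hdiag, one_mul, hUU]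

end Aux

/-- For a Hermitian matrix `A`, `z = u + iv` with `v > 0`, and `A_k` obtained
from `A` by deleting the `k`-th row and column, the traces of the resolvents
satisfy `|tr (A - zI)⁻¹ - tr (A_k - zI)⁻¹| ≤ 1/v`. -/
theorem trace_resolvent_submatrix_diff_le {n : ℕ}
    (A : Matrix (Fin (n + 1)) (Fin (n + 1)) ℂ) (hA : A.IsHermitian)
    (k : Fin (n + 1)) (u v : ℝ) (hv : 0 < v) (z : ℂ) (hz : z = ⟨u, v⟩) :
    ‖((A - z • (1 : Matrix (Fin (n + 1)) (Fin (n + 1)) ℂ))⁻¹.trace -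
          ((A.submatrix k.succAbove k.succAbove
              - z • (1 : Matrix (Fin n) (Fin n) ℂ))⁻¹).trace)‖ ≤ 1 / v := by
  have hzim : z.im = v := by rw [hz]
  have hzim0 : z.im ≠ 0 := by rw [hzim]; exact ne_of_gt hv
  set U : Matrix (Fin (n+1)) (Fin (n+1)) ℂ := (hA.eigenvectorUnitary : Matrix (Fin (n+1)) (Fin (n+1)) ℂ) with hU
  set lam : Fin (n+1) → ℝ := hA.eigenvalues with hlam
  set f : Fin (n+1) → ℂ := fun i => ((lam i : ℂ) - z)⁻¹ with hf
  set N : Matrix (Fin (n+1)) (Fin (n+1)) ℂ := U * diagonal f * star U with hN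
  set M : Matrix (Fin (n+1)) (Fin (n+1)) ℂ := A - z • 1 with hM
  have hMN : M * N = 1 := resolvent_right_inv A hA hzim0
  have hNM : N * M = 1 := mul_eq_one_comm.mp hMN
  have hMinv : M⁻¹ = N := Matrix.inv_eq_right_inv hMN
  -- weights
  set w : Fin (n+1) → ℝ := fun i => Complex.normSq (U k i) with hw
  have hNapp : ∀ i j : Fin (n+1), N i j = ∑ l, U i l * f l * (starRingEnd ℂ) (U j l) := by
    intro i j
    rw [hN, Matrix.mul_apply]
    refine Finset.sum_congr rfl fun l _ => ?_
    rw [Matrix.mul_diagonal, Matrix.star_apply, Complex.star_def]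
  have hNkk : N k k = ∑ i, (w i : ℂ) * f i := by
    rw [hNapp]
    refine Finset.sum_congr rfl fun i _ => ?_
    rw [hw]
    push_cast [Complex.normSq_eq_conj_mul_self]
    ring
  have hNsq : (N * N) k k = ∑ i, (w i : ℂ) * (f i)^2 := by
    have hNN : N * N = U * diagonal (fun i => f i * f i) * star U := by
      rw [hN]
      have hUU' : star U * U = 1 := Matrix.mem_unitaryGroup_iff'.mp hA.eigenvectorUnitary.2
      have hstep : ∀ X : Matrix (Fin (n+1)) (Fin (n+1)) ℂ, star U * (U * X) = X := by
        intro X; rw [← mul_assoc, hUU', one_mul]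
      rw [← diagonal_mul_diagonal]
      simp only [Matrix.mul_assoc]
      rw [hstep]
    rw [hNN, Matrix.mul_apply]
    have : ∀ l, (U * diagonal (fun i => f i * f i)) k l * star U l k
        = U k l * (f l * f l) * (starRingEnd ℂ) (U k l) := by
      intro l
      rw [Matrix.mul_diagonal, Matrix.star_apply, Complex.star_def]
    rw [Finset.sum_congr rfl fun l _ => this l]
    refine Finset.sum_congr rfl fun i _ => ?_
    rw [hw]
    push_cast [Complex.normSq_eq_conj_mul_self]
    ring
  have hsumw : ∑ i, w i = 1 := by
    have hUU : U * star U = 1 := Matrix.mem_unitaryGroup_iff.mp hA.eigenvectorUnitary.2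
    have h1 : (U * star U) k k = 1 := by rw [hUU]; simp
    have h2 : (U * star U) k k = ∑ i, ((w i : ℝ) : ℂ) := by
      rw [Matrix.mul_apply]
      refine Finset.sum_congr rfl fun i _ => ?_
      rw [Matrix.star_apply, Complex.star_def, hw]
      push_cast [Complex.normSq_eq_conj_mul_self]
      ring
    have := h1.symm.trans h2
    exact_mod_cast (congrArg Complex.re this).symm
  -- analytic facts about g and h
  set g : ℂ := N k k with hg
  set h : ℂ := (N * N) k k with hh
  set t : Fin (n+1) → ℝ := fun i => w i / Complex.normSq ((lam i : ℂ) - z) with ht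
  have hwnn : ∀ i, 0 ≤ w i := fun i => Complex.normSq_nonneg _
  have htnn : ∀ i, 0 ≤ t i := fun i => div_nonneg (hwnn i) (Complex.normSq_nonneg _)
  have hfim : ∀ i, (f i).im = v / Complex.normSq ((lam i : ℂ) - z) := by
    intro i
    rw [hf]
    simp only [Complex.inv_im]
    have : ((lam i : ℂ) - z).im = -v := by simp [hzim]
    rw [this]
    ring
  have hgim : g.im = v * ∑ i, t i := by
    rw [hNkk, Complex.im_sum]
    rw [Finset.mul_sum]
    refine Finset.sum_congr rfl fun i _ => ?_
    rw [Complex.mul_im]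
    simp [hfim i, ht]
    ring
  have hsumt_pos : 0 < ∑ i, t i := by
    have : ∃ i, 0 < w i := by
      by_contra hcon
      push_neg at hcon
      have : ∑ i, w i = 0 := Finset.sum_eq_zero fun i _ => le_antisymm (hcon i) (hwnn i)
      rw [hsumw] at this; norm_num at this
    obtain ⟨i, hi⟩ := this
    have hnsq : 0 < Complex.normSq ((lam i : ℂ) - z) := by
      apply Complex.normSq_pos.mpr
      intro hcon
      have := congrArg Complex.im hcon
      simp [hzim] at this
      exact hv.ne' this
    refine lt_of_lt_of_le (div_pos hi hnsq) ?_
    exact Finset.single_le_sum (fun j _ => htnn j) (Finset.mem_univ i)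
  have hgim_pos : 0 < g.im := by rw [hgim]; positivity
  have hgabs : v * ∑ i, t i ≤ ‖g‖ := by
    rw [← hgim]; exact Complex.im_le_norm g
  have hg0 : g ≠ 0 := by
    intro hcon; rw [hcon] at hgim_pos; simp at hgim_pos
  have habs_h : ‖h‖ ≤ ∑ i, t i := by
    rw [hNsq]
    refine le_trans (norm_sum_le _ _) ?_
    refine Finset.sum_le_sum fun i _ => ?_
    rw [norm_mul, norm_pow]
    have h1 : ‖((w i : ℂ))‖ = w i := by
      rw [Complex.norm_real, Real.norm_eq_abs, abs_of_nonneg (hwnn i)]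
    have h2 : (‖f i‖)^2 = (Complex.normSq ((lam i : ℂ) - z))⁻¹ := by
      rw [hf, norm_inv, ← Complex.sq_norm]
      rw [inv_pow]
    rw [h1, h2, ht]
    simp [div_eq_mul_inv]
  -- the algebraic identity
  set sa : Fin n → Fin (n+1) := k.succAbove with hsa
  have hsainj : Function.Injective sa := Fin.succAbove_right_injective
  have hsane : ∀ i, sa i ≠ k := fun i => Fin.succAbove_ne k i
  set d : Matrix (Fin n) (Fin n) ℂ := A.submatrix sa sa - z • 1 with hd
  have hdsub : d = M.submatrix sa sa := by
    rw [hd, hM]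
    ext i j
    simp [Matrix.submatrix_apply, Matrix.sub_apply, Matrix.smul_apply, Matrix.one_apply,
      hsainj.eq_iff]
  set P : Matrix (Fin n) (Fin n) ℂ :=
    Matrix.of (fun i j => N (sa i) (sa j) - N (sa i) k * N k (sa j) / g) with hP
  have hMNapp : ∀ i j, ∑ l, M i l * N l j = if i = j then 1 else 0 := by
    intro i j
    have := congrFun (congrFun hMN i) j
    rw [Matrix.mul_apply] at this
    rw [this, Matrix.one_apply]
  have hdP : d * P = 1 := by
    ext i j
    rw [Matrix.mul_apply, hdsub]
    have expand : ∀ l, M.submatrix sa sa i l * P l j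
        = M (sa i) (sa l) * N (sa l) (sa j)
          - M (sa i) (sa l) * N (sa l) k * (N k (sa j) / g) := by
      intro l
      rw [hP, Matrix.submatrix_apply]
      simp only [Matrix.of_apply]
      ring
    rw [Finset.sum_congr rfl fun l _ => expand l, Finset.sum_sub_distrib, ← Finset.sum_mul]
    have key1 : ∑ l, M (sa i) (sa l) * N (sa l) (sa j)
        = (if i = j then 1 else 0) - M (sa i) k * N k (sa j) := by
      have h1 := hMNapp (sa i) (sa j)
      rw [Fin.sum_univ_succAbove (fun l => M (sa i) l * N l (sa j)) k] at h1
      by_cases hij : i = j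
      · subst hij
        rw [if_pos rfl] at h1 ⊢
        linear_combination h1
      · rw [if_neg hij]
        rw [if_neg (fun hc => hij (hsainj hc))] at h1
        linear_combination h1
    have key2 : ∑ l, M (sa i) (sa l) * N (sa l) k = - (M (sa i) k * g) := by
      have := hMNapp (sa i) k
      rw [Fin.sum_univ_succAbove (fun l => M (sa i) l * N l k) k, if_neg (hsane i)] at this
      rw [hg]
      linear_combination this
    rw [key1, key2, Matrix.one_apply]
    field_simp
    split <;> ring
  have hdinv : d⁻¹ = P := Matrix.inv_eq_right_inv hdP
  have htrace : M⁻¹.trace - d⁻¹.trace = h / g := by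
    rw [hMinv, hdinv, Matrix.trace, Matrix.trace]
    have htrN : ∑ i, N.diag i = N k k + ∑ i : Fin n, N (sa i) (sa i) :=
      Fin.sum_univ_succAbove (fun l => N l l) k
    have htrP : ∑ j, P.diag j
        = ∑ j : Fin n, N (sa j) (sa j) - (∑ j : Fin n, N (sa j) k * N k (sa j)) / g := by
      rw [Finset.sum_div, ← Finset.sum_sub_distrib]
      rfl
    rw [htrN, htrP, hh]
    have hNNkk : (N * N) k k = N k k * N k k + ∑ j : Fin n, N k (sa j) * N (sa j) k := by
      rw [Matrix.mul_apply]
      exact Fin.sum_univ_succAbove (fun l => N k l * N l k) k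
    rw [hNNkk, ← hg]
    field_simp
    ring_nf
    congr 1
    exact Finset.sum_congr rfl fun j _ => mul_comm (N (sa j) k) (N k (sa j))
  rw [htrace, norm_div]
  rw [div_le_div_iff₀ (norm_pos_iff.mpr hg0) hv]
  calc ‖h‖ * v ≤ (∑ i, t i) * v := by
        exact mul_le_mul_of_nonneg_right habs_h (le_of_lt hv)
    _ = v * ∑ i, t i := by ring
    _ ≤ ‖g‖ := hgabs
    _ = 1 * ‖g‖ := by ring
end

section
/- For the Marčenko–Pastur law F_y with y ∈ (0, 1], a = (1-√y)², and all v > 0: sup_x ∫_{|u| < v} |F_y(x + u) - F_y(x)| du ≤ (11·√(2(1+y))/(3πy)) · v²/(√a + √v). -/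
open MeasureTheory

/-- The density of the Marčenko–Pastur law with ratio index `y` (σ² = 1). -/
noncomputable def mpDensity (y x : ℝ) : ℝ :=
  if (1 - Real.sqrt y) ^ 2 ≤ x ∧ x ≤ (1 + Real.sqrt y) ^ 2 then
    Real.sqrt (((1 + Real.sqrt y) ^ 2 - x) * (x - (1 - Real.sqrt y) ^ 2)) /
      (2 * Real.pi * x * y)
  else 0

/-- The distribution function of the Marčenko–Pastur law with index `y ≤ 1`. -/
noncomputable def mpCdf (y x : ℝ) : ℝ := ∫ t in Set.Iic x, mpDensity y t

lemma mpDensity_nonneg {y : ℝ} (hy : 0 < y) (t : ℝ) : 0 ≤ mpDensity y t := by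
  unfold mpDensity
  split
  · rename_i h
    have ht : (0:ℝ) ≤ t := le_trans (sq_nonneg _) h.1
    apply div_nonneg (Real.sqrt_nonneg _)
    have : (0:ℝ) ≤ 2 * Real.pi := by positivity
    exact mul_nonneg (mul_nonneg this ht) hy.le
  · exact le_rfl

lemma mpDensity_eq_zero {y : ℝ} {t : ℝ} (ht : t ≤ (1 - Real.sqrt y) ^ 2) :
    mpDensity y t = 0 := by
  unfold mpDensity
  split
  · rename_i h
    have : t = (1 - Real.sqrt y) ^ 2 := le_antisymm ht h.1
    rw [this]
    simp
  · rfl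

lemma mpDensity_le {y : ℝ} (hy : 0 < y) (t : ℝ) :
    mpDensity y t ≤ (1 + Real.sqrt y) / (2 * Real.pi * y) * (Real.sqrt t)⁻¹ := by
  have hC : (0:ℝ) ≤ (1 + Real.sqrt y) / (2 * Real.pi * y) := by positivity
  unfold mpDensity
  split
  · rename_i h
    have ht0 : (0:ℝ) ≤ t := le_trans (sq_nonneg _) h.1
    rcases eq_or_lt_of_le ht0 with rfl | ht
    · have h1 : (0:ℝ) - (1 - Real.sqrt y)^2 ≤ 0 := by nlinarith [sq_nonneg (1 - Real.sqrt y)]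
      have h2 : (0:ℝ) - (1 - Real.sqrt y)^2 = 0 := le_antisymm h1 (by nlinarith [h.1])
      rw [h2, mul_zero, Real.sqrt_zero, zero_div]
      positivity
    · have hb : (0:ℝ) ≤ 1 + Real.sqrt y := by positivity
      have hnum : Real.sqrt (((1 + Real.sqrt y) ^ 2 - t) * (t - (1 - Real.sqrt y) ^ 2))
          ≤ (1 + Real.sqrt y) * Real.sqrt t := by
        have : ((1 + Real.sqrt y) ^ 2 - t) * (t - (1 - Real.sqrt y) ^ 2)
            ≤ (1 + Real.sqrt y) ^ 2 * t := by
          have h2 : (0:ℝ) ≤ (1 + Real.sqrt y) ^ 2 - t := sub_nonneg.2 h.2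
          have h3 : t - (1 - Real.sqrt y) ^ 2 ≤ t := by nlinarith [sq_nonneg (1 - Real.sqrt y)]
          have h4 : (1 + Real.sqrt y) ^ 2 - t ≤ (1 + Real.sqrt y) ^ 2 := by linarith
          nlinarith [sq_nonneg (1 - Real.sqrt y), h.1]
        calc Real.sqrt (((1 + Real.sqrt y) ^ 2 - t) * (t - (1 - Real.sqrt y) ^ 2))
            ≤ Real.sqrt ((1 + Real.sqrt y) ^ 2 * t) := Real.sqrt_le_sqrt this
          _ = (1 + Real.sqrt y) * Real.sqrt t := by
              rw [Real.sqrt_mul (by positivity), Real.sqrt_sq hb]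
      have hden : (0:ℝ) < 2 * Real.pi * t * y := by positivity
      rw [div_le_iff₀ hden]
      have hst : Real.sqrt t > 0 := Real.sqrt_pos.2 ht
      have htt : Real.sqrt t * Real.sqrt t = t := Real.mul_self_sqrt ht.le
      have : (1 + Real.sqrt y) / (2 * Real.pi * y) * (Real.sqrt t)⁻¹ * (2 * Real.pi * t * y)
          = (1 + Real.sqrt y) * Real.sqrt t := by
        field_simp
        linear_combination (-1 : ℝ) * htt
      rw [this]
      exact hnum
  · positivity

lemma mpDensity_measurable (y : ℝ) : Measurable (mpDensity y) := by
  unfold mpDensity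
  apply Measurable.ite
  · exact measurableSet_Icc (a := (1 - Real.sqrt y)^2) (b := (1 + Real.sqrt y)^2)
  · fun_prop
  · exact measurable_const

lemma mpDensity_integrable {y : ℝ} (hy : 0 < y) : Integrable (mpDensity y) := by
  set b := (1 + Real.sqrt y)^2 with hb
  set C := (1 + Real.sqrt y) / (2 * Real.pi * y) with hCdef
  have hrint : IntegrableOn (fun t : ℝ => t ^ (-(1/2) : ℝ)) (Set.Ioc 0 b) := by
    exact (intervalIntegral.intervalIntegrable_rpow' (by norm_num)).1
  have hint : IntegrableOn (fun t : ℝ => C * (Real.sqrt t)⁻¹) (Set.Ioc 0 b) := by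
    apply IntegrableOn.congr_fun (hrint.const_mul C) ?_ measurableSet_Ioc
    intro t ht
    show C * t ^ (-(1/2) : ℝ) = C * (Real.sqrt t)⁻¹
    rw [Real.rpow_neg ht.1.le, ← Real.sqrt_eq_rpow]
  have hindicator : Integrable ((Set.Ioc (0:ℝ) b).indicator fun t => C * (Real.sqrt t)⁻¹) :=
    hint.integrable_indicator measurableSet_Ioc
  apply hindicator.mono' (mpDensity_measurable y).aestronglyMeasurable
  filter_upwards with t
  rw [Real.norm_eq_abs, abs_of_nonneg (mpDensity_nonneg hy t)]
  by_cases ht : t ∈ Set.Ioc (0:ℝ) b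
  · rw [Set.indicator_of_mem ht]
    exact mpDensity_le hy t
  · rw [Set.indicator_of_notMem ht]
    rcases not_and_or.1 ht with h | h
    · push_neg at h
      have : t ≤ (1 - Real.sqrt y)^2 := le_trans h (sq_nonneg _)
      rw [mpDensity_eq_zero this]
    · push_neg at h
      unfold mpDensity
      rw [if_neg]
      rintro ⟨-, h2⟩
      exact absurd h2 (not_le.2 h)

lemma mpCdf_sub {y : ℝ} (hy : 0 < y) {x s : ℝ} (h : x ≤ s) :
    mpCdf y s - mpCdf y x = ∫ t in Set.Ioc x s, mpDensity y t := by
  have hi := mpDensity_integrable hy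
  unfold mpCdf
  rw [← Set.Iic_union_Ioc_eq_Iic h,
    setIntegral_union (Set.Iic_disjoint_Ioc le_rfl) measurableSet_Ioc
      hi.integrableOn hi.integrableOn]
  ring

lemma mpCdf_mono {y : ℝ} (hy : 0 < y) : Monotone (mpCdf y) := by
  intro x s h
  have := mpCdf_sub hy h
  have h2 : 0 ≤ ∫ t in Set.Ioc x s, mpDensity y t :=
    setIntegral_nonneg measurableSet_Ioc fun t _ => mpDensity_nonneg hy t
  linarith

lemma integral_inv_sqrt_Ioc {m s : ℝ} (hm : 0 ≤ m) (hms : m ≤ s) :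
    ∫ t in Set.Ioc m s, (Real.sqrt t)⁻¹ = 2 * (Real.sqrt s - Real.sqrt m) := by
  have h1 : ∫ t in Set.Ioc m s, (Real.sqrt t)⁻¹
      = ∫ t in Set.Ioc m s, t ^ (-(1/2) : ℝ) := by
    apply setIntegral_congr_fun measurableSet_Ioc
    intro t ht
    show (Real.sqrt t)⁻¹ = t ^ (-(1/2) : ℝ)
    rw [Real.rpow_neg (hm.trans ht.1.le), ← Real.sqrt_eq_rpow]
  rw [h1, ← intervalIntegral.integral_of_le hms,
    integral_rpow (Or.inl (by norm_num))]
  rw [show (-(1/2) : ℝ) + 1 = 1/2 by norm_num, ← Real.sqrt_eq_rpow, ← Real.sqrt_eq_rpow]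
  ring

lemma sqrt_diff_bound {A m s v : ℝ} (hA : 0 ≤ A) (hAm : A ≤ Real.sqrt m)
    (hm : 0 ≤ m) (hms : m ≤ s) (hv : 0 < v) (hsv : s - m ≤ v) :
    Real.sqrt s - Real.sqrt m ≤ Real.sqrt (s - m) * Real.sqrt v / (A + Real.sqrt v) := by
  set p := Real.sqrt m with hpd
  set q := Real.sqrt s with hqd
  set W := Real.sqrt (s - m) with hWd
  set V := Real.sqrt v with hVd
  have hs0 : 0 ≤ s := hm.trans hms
  have hq : q^2 = s := Real.sq_sqrt hs0
  have hp : p^2 = m := Real.sq_sqrt hm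
  have hW : W^2 = s - m := Real.sq_sqrt (by linarith)
  have hp0 : 0 ≤ p := Real.sqrt_nonneg m
  have hq0 : 0 ≤ q := Real.sqrt_nonneg s
  have hW0 : 0 ≤ W := Real.sqrt_nonneg _
  have hV0 : 0 < V := Real.sqrt_pos.2 hv
  have hpq : p ≤ q := Real.sqrt_le_sqrt hms
  have hWV : W ≤ V := Real.sqrt_le_sqrt hsv
  have hWq : W ≤ q := Real.sqrt_le_sqrt (by linarith)
  have hAV : 0 < A + V := by linarith
  rw [le_div_iff₀ hAV]
  have f1 : (q - p) * (q + p) = W^2 := by linear_combination hq - hp - hW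
  have f2 : q - p ≤ W := by
    nlinarith [f1, mul_nonneg hp0 (sub_nonneg.2 hpq), sq_nonneg (q - p - W)]
  have f3 : (q - p) * (W + A) ≤ (q - p) * (q + p) :=
    mul_le_mul_of_nonneg_left (by linarith) (by linarith)
  nlinarith [mul_nonneg (sub_nonneg.2 hWV) (sub_nonneg.2 f2), f1, f3]

lemma mpCdf_incr {y : ℝ} (hy0 : 0 < y) {v x s : ℝ} (hv : 0 < v) (hxs : x ≤ s)
    (hsv : s - x ≤ v) :
    mpCdf y s - mpCdf y x ≤
      (1 + Real.sqrt y) / (Real.pi * y) *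
        (Real.sqrt v / (Real.sqrt ((1 - Real.sqrt y) ^ 2) + Real.sqrt v)) *
        Real.sqrt (s - x) := by
  have hπ : (0:ℝ) < Real.pi := Real.pi_pos
  set a := (1 - Real.sqrt y) ^ 2 with ha
  have ha0 : (0:ℝ) ≤ a := sq_nonneg _
  set A := Real.sqrt a with hA
  set V := Real.sqrt v with hV
  have hA0 : 0 ≤ A := Real.sqrt_nonneg _
  have hV0 : 0 < V := Real.sqrt_pos.2 hv
  have hRHS : 0 ≤ (1 + Real.sqrt y) / (Real.pi * y) * (V / (A + V)) * Real.sqrt (s - x) := by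
    positivity
  rw [mpCdf_sub hy0 hxs]
  rcases le_or_gt s a with hsa | has
  · have hz : ∫ t in Set.Ioc x s, mpDensity y t = 0 := by
      rw [setIntegral_congr_fun (g := fun _ => (0:ℝ)) measurableSet_Ioc
        (fun t ht => mpDensity_eq_zero (ht.2.trans hsa))]
      simp
    rw [hz]; exact hRHS
  · set m := max x a with hm
    have hxm : x ≤ m := le_max_left _ _
    have ham : a ≤ m := le_max_right _ _
    have hms : m ≤ s := max_le hxs has.le
    have hm0 : 0 ≤ m := ha0.trans ham
    set C := (1 + Real.sqrt y) / (2 * Real.pi * y) with hC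
    have hC0 : 0 ≤ C := by positivity
    have hsplit : Set.Ioc x s = Set.Ioc x m ∪ Set.Ioc m s :=
      (Set.Ioc_union_Ioc_eq_Ioc hxm hms).symm
    have hi := mpDensity_integrable hy0
    rw [hsplit, setIntegral_union (Set.Ioc_disjoint_Ioc_of_le le_rfl) measurableSet_Ioc
      hi.integrableOn hi.integrableOn]
    have h1 : ∫ t in Set.Ioc x m, mpDensity y t = 0 := by
      rw [setIntegral_congr_fun (g := fun _ => (0:ℝ)) measurableSet_Ioc ?_]
      · simp
      · intro t ht
        rcases le_or_gt t a with h | h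
        · exact mpDensity_eq_zero h
        · exact absurd ht.2 (not_le.2 (max_lt ht.1 h))
    have hint : IntegrableOn (fun t : ℝ => C * (Real.sqrt t)⁻¹) (Set.Ioc m s) := by
      apply IntegrableOn.congr_fun
        (((intervalIntegral.intervalIntegrable_rpow' (r := -(1/2)) (by norm_num)).1).const_mul C)
        ?_ measurableSet_Ioc
      intro t ht
      show C * t ^ (-(1/2) : ℝ) = C * (Real.sqrt t)⁻¹
      rw [Real.rpow_neg (hm0.trans ht.1.le), ← Real.sqrt_eq_rpow]
    have h2 : ∫ t in Set.Ioc m s, mpDensity y t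
        ≤ ∫ t in Set.Ioc m s, C * (Real.sqrt t)⁻¹ :=
      setIntegral_mono_on hi.integrableOn hint measurableSet_Ioc
        fun t _ => mpDensity_le hy0 t
    have h3 : ∫ t in Set.Ioc m s, C * (Real.sqrt t)⁻¹
        = C * (2 * (Real.sqrt s - Real.sqrt m)) := by
      rw [MeasureTheory.integral_const_mul, integral_inv_sqrt_Ioc hm0 hms]
    have h4 : Real.sqrt s - Real.sqrt m ≤ Real.sqrt (s - x) * V / (A + V) := by
      have hb := sqrt_diff_bound hA0 (Real.sqrt_le_sqrt ham) hm0 hms hv (by linarith)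
      refine hb.trans ?_
      have hle : Real.sqrt (s - m) ≤ Real.sqrt (s - x) := Real.sqrt_le_sqrt (by linarith)
      have hVnn : (0:ℝ) ≤ V := hV0.le
      gcongr
    have h5 : C * (2 * (Real.sqrt s - Real.sqrt m))
        ≤ (1 + Real.sqrt y) / (Real.pi * y) * (V / (A + V)) * Real.sqrt (s - x) := by
      have e1 : (1 + Real.sqrt y) / (Real.pi * y) * (V / (A + V)) * Real.sqrt (s - x)
          = C * (2 * (Real.sqrt (s - x) * V / (A + V))) := by
        rw [hC]; field_simp
      rw [e1]
      have := mul_le_mul_of_nonneg_left (by linarith : 2 * (Real.sqrt s - Real.sqrt m) ≤ 2 * (Real.sqrt (s - x) * V / (A + V))) hC0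
      exact this
    linarith

/-- For the Marčenko–Pastur law `F_y`, `0 < y ≤ 1`, `a = (1-√y)²`, and `v > 0`:
`sup_x ∫_{|u|<v} |F_y(x+u) - F_y(x)| du ≤ (11√(2(1+y))/(3πy)) v²/(√a + √v)`. -/
theorem mp_cdf_integral_increment_bound (y : ℝ) (hy0 : 0 < y) (hy1 : y ≤ 1)
    (v : ℝ) (hv : 0 < v) :
    ∀ x : ℝ, ∫ u in Set.Ioo (-v) v, |mpCdf y (x + u) - mpCdf y x| ≤
      (11 * Real.sqrt (2 * (1 + y)) / (3 * Real.pi * y)) *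
        (v ^ 2 / (Real.sqrt ((1 - Real.sqrt y) ^ 2) + Real.sqrt v)) := by
  intro x
  have hπ : (0:ℝ) < Real.pi := Real.pi_pos
  have hA0 : (0:ℝ) ≤ Real.sqrt ((1 - Real.sqrt y) ^ 2) := Real.sqrt_nonneg _
  have hV0 : (0:ℝ) < Real.sqrt v := Real.sqrt_pos.2 hv
  have hAV : (0:ℝ) < Real.sqrt ((1 - Real.sqrt y) ^ 2) + Real.sqrt v := by linarith
  have hK0 : (0:ℝ) ≤ (1 + Real.sqrt y) / (Real.pi * y) *
      (Real.sqrt v / (Real.sqrt ((1 - Real.sqrt y) ^ 2) + Real.sqrt v)) := by positivity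
  -- pointwise bound
  have hpt : ∀ u ∈ Set.Ioo (-v) v, |mpCdf y (x + u) - mpCdf y x| ≤
      (1 + Real.sqrt y) / (Real.pi * y) *
        (Real.sqrt v / (Real.sqrt ((1 - Real.sqrt y) ^ 2) + Real.sqrt v)) *
        Real.sqrt |u| := by
    intro u hu
    rcases le_or_gt 0 u with h0 | h0
    · have hmono : mpCdf y x ≤ mpCdf y (x + u) := mpCdf_mono hy0 (by linarith)
      rw [abs_of_nonneg (by linarith), abs_of_nonneg h0]
      have h := mpCdf_incr hy0 hv (by linarith : x ≤ x + u)
        (by simp only [add_sub_cancel_left]; exact hu.2.le)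
      rwa [show x + u - x = u by ring] at h
    · have hmono : mpCdf y (x + u) ≤ mpCdf y x := mpCdf_mono hy0 (by linarith)
      rw [abs_of_nonpos (by linarith), abs_of_neg h0, neg_sub]
      have h := mpCdf_incr hy0 hv (by linarith : x + u ≤ x)
        (by rw [show x - (x + u) = -u by ring]; linarith [hu.1])
      rwa [show x - (x + u) = -u by ring] at h
  have hcont : Continuous fun u : ℝ => (1 + Real.sqrt y) / (Real.pi * y) *
      (Real.sqrt v / (Real.sqrt ((1 - Real.sqrt y) ^ 2) + Real.sqrt v)) * Real.sqrt |u| :=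
    continuous_const.mul (Real.continuous_sqrt.comp continuous_abs)
  have hg : IntegrableOn (fun u : ℝ => (1 + Real.sqrt y) / (Real.pi * y) *
      (Real.sqrt v / (Real.sqrt ((1 - Real.sqrt y) ^ 2) + Real.sqrt v)) * Real.sqrt |u|)
      (Set.Ioo (-v) v) :=
    (hcont.integrableOn_Icc (a := -v) (b := v)).mono_set Set.Ioo_subset_Icc_self
  have hmeasF : AEStronglyMeasurable (fun u : ℝ => |mpCdf y (x + u) - mpCdf y x|)
      (volume.restrict (Set.Ioo (-v) v)) := by
    apply Measurable.aestronglyMeasurable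
    exact ((((mpCdf_mono hy0).measurable).comp (measurable_const.add measurable_id)).sub
      measurable_const).abs
  have hfint : IntegrableOn (fun u : ℝ => |mpCdf y (x + u) - mpCdf y x|)
      (Set.Ioo (-v) v) := by
    apply hg.mono' hmeasF
    rw [ae_restrict_iff' measurableSet_Ioo]
    filter_upwards with u hu
    rw [Real.norm_eq_abs, abs_abs]
    exact hpt u hu
  -- integral of sqrt |u|
  have hsqrtint : ∫ u in Set.Ioo (-v) v, Real.sqrt |u| = 4/3 * (v * Real.sqrt v) := by
    rw [← MeasureTheory.integral_Ioc_eq_integral_Ioo,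
      ← intervalIntegral.integral_of_le (by linarith : -v ≤ v)]
    have hconts : Continuous fun u : ℝ => Real.sqrt |u| :=
      Real.continuous_sqrt.comp continuous_abs
    have hsplit := intervalIntegral.integral_add_adjacent_intervals (μ := volume)
      (f := fun u : ℝ => Real.sqrt |u|) (a := -v) (b := 0) (c := v)
      (hconts.intervalIntegrable _ _) (hconts.intervalIntegrable _ _)
    have hpos : ∫ u in (0:ℝ)..v, Real.sqrt |u| = 2/3 * (v * Real.sqrt v) := by
      have h1 : ∫ u in (0:ℝ)..v, Real.sqrt |u| = ∫ u in (0:ℝ)..v, u ^ ((1:ℝ)/2) := by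
        apply intervalIntegral.integral_congr
        intro u hu
        rw [Set.uIcc_of_le hv.le] at hu
        show Real.sqrt |u| = u ^ ((1:ℝ)/2)
        rw [abs_of_nonneg hu.1, Real.sqrt_eq_rpow]
      rw [h1, integral_rpow (Or.inl (by norm_num)),
        Real.zero_rpow (by norm_num : ((1:ℝ)/2 + 1) ≠ 0),
        show ((1:ℝ)/2 + 1) = 1 + 1/2 by norm_num,
        Real.rpow_add hv, Real.rpow_one, ← Real.sqrt_eq_rpow]
      ring
    have hneg : ∫ u in (-v)..(0:ℝ), Real.sqrt |u| = 2/3 * (v * Real.sqrt v) := by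
      have h2 : ∫ u in (0:ℝ)..v, Real.sqrt |(-u)| = ∫ u in (-v)..(0:ℝ), Real.sqrt |u| := by
        simpa using intervalIntegral.integral_comp_neg (a := 0) (b := v)
          (fun u : ℝ => Real.sqrt |u|)
      rw [← h2]
      simp only [abs_neg]
      exact hpos
    linarith [hsplit]
  have step1 : ∫ u in Set.Ioo (-v) v, |mpCdf y (x + u) - mpCdf y x| ≤
      ∫ u in Set.Ioo (-v) v, (1 + Real.sqrt y) / (Real.pi * y) *
        (Real.sqrt v / (Real.sqrt ((1 - Real.sqrt y) ^ 2) + Real.sqrt v)) *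
        Real.sqrt |u| :=
    setIntegral_mono_on hfint hg measurableSet_Ioo hpt
  rw [MeasureTheory.integral_const_mul, hsqrtint] at step1
  refine step1.trans ?_
  -- final arithmetic
  have hsq : 1 + Real.sqrt y ≤ Real.sqrt (2 * (1 + y)) := by
    rw [show (1:ℝ) + Real.sqrt y = Real.sqrt ((1 + Real.sqrt y)^2) from
      (Real.sqrt_sq (by positivity)).symm]
    apply Real.sqrt_le_sqrt
    nlinarith [Real.sq_sqrt hy0.le, sq_nonneg (1 - Real.sqrt y)]
  have hvv : Real.sqrt v * Real.sqrt v = v := Real.mul_self_sqrt hv.le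
  have e1 : (1 + Real.sqrt y) / (Real.pi * y) *
      (Real.sqrt v / (Real.sqrt ((1 - Real.sqrt y) ^ 2) + Real.sqrt v)) *
      (4/3 * (v * Real.sqrt v))
      = (4 * (1 + Real.sqrt y)) / (3 * Real.pi * y) *
        (v ^ 2 / (Real.sqrt ((1 - Real.sqrt y) ^ 2) + Real.sqrt v)) := by
    field_simp
    linear_combination (1 : ℝ) * hvv
  rw [e1]
  apply mul_le_mul_of_nonneg_right _ (by positivity)
  rw [div_le_div_iff₀ (by positivity) (by positivity)]
  nlinarith [mul_le_mul_of_nonneg_right hsq (by positivity : (0:ℝ) ≤ 3 * Real.pi * y),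
    mul_nonneg (Real.sqrt_nonneg (2 * (1 + y))) (by positivity : (0:ℝ) ≤ 3 * Real.pi * y)]
end
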